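/- Let w : U → ℂ be holomorphic with w(0) = 0 and |w(z)| < 1 for all z ∈ U, let a_k denote the k-th Taylor coefficient of w at 0, and set a = (a_1,…,a_n) ∈ ℂ^n. Then for every u ∈ ℝ and every k with 1 ≤ k ≤ n, the k-th Taylor coefficient at 0 of the function z ↦ −w(z)·(e^{iu}+w(z))/(e^{iu}−w(z)) equals −a_k − 2∑_{s=1}^{k−1} e^{−isu} (A(a)^s a)_k. (Consequently, the first n Taylor coefficients of a solution of the Löwner ordinary differential equation dw/dt = −w(e^{iu(t)}+w)/(e^{iu(t)}−w) satisfy the phase system ȧ = −a − 2∑_{s=1}^{n−1} e^{−isu(t)} A(a)^s a.) -/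

import Mathlib

open Complex Metric

/-- The `k`-th Taylor coefficient of `f` at `0`. -/
noncomputable def taylorCoeff (f : ℂ → ℂ) (k : ℕ) : ℂ :=
  iteratedDeriv k f 0 / Nat.factorial k

/-- The lower-triangular nilpotent Toeplitz matrix `A(a)` with `A(a)_{j,k} = a_{j-k}`
(1-indexed) for `j > k` and `0` otherwise. -/
noncomputable def toeplitzA {n : ℕ} (a : Fin n → ℂ) : Matrix (Fin n) (Fin n) ℂ :=
  Matrix.of fun j k =>
    if _ : (k : ℕ) < (j : ℕ) then a ⟨(j : ℕ) - (k : ℕ) - 1, by have := j.isLt; omega⟩ else 0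

/-- The Löwner kernel `p(ζ, u) = (e^{iu} + ζ)/(e^{iu} - ζ)`. -/
noncomputable def lkernel (ζ : ℂ) (u : ℝ) : ℂ :=
  (Complex.exp (u * Complex.I) + ζ) / (Complex.exp (u * Complex.I) - ζ)

open Topology Filter Polynomial

section Aux

lemma analyticAt_deriv' {f : ℂ → ℂ} {x : ℂ} (h : AnalyticAt ℂ f x) :
    AnalyticAt ℂ (deriv f) x := by
  obtain ⟨s, hs, hos⟩ := h.exists_mem_nhds_analyticOnNhd
  exact hos.deriv _ (mem_of_mem_nhds hs)

lemma analyticAt_polyeval (P : Polynomial ℂ) (x : ℂ) :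
    AnalyticAt ℂ (fun z => P.eval z) x :=
  (P.differentiable).analyticAt x

lemma vanish_highorder : ∀ (k K : ℕ) (g : ℂ → ℂ), AnalyticAt ℂ g 0 → k ≤ K →
    iteratedDeriv k (fun z => z ^ (K + 1) * g z) 0 = 0 := by
  intro k
  induction k with
  | zero =>
    intro K g hg _
    simp [iteratedDeriv_zero]
  | succ k ih =>
    intro K g hg hk
    obtain ⟨K, rfl⟩ : ∃ K', K = K' + 1 := ⟨K - 1, by omega⟩
    rw [iteratedDeriv_succ']
    have hev : deriv (fun z => z ^ (K + 1 + 1) * g z) =ᶠ[𝓝 (0:ℂ)]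
        fun z => z ^ (K + 1) * ((((K:ℂ) + 2)) * g z + z * deriv g z) := by
      filter_upwards [hg.eventually_analyticAt] with z hz
      rw [deriv_fun_mul (differentiableAt_pow _) hz.differentiableAt, deriv_pow_field]
      push_cast
      ring
    rw [Filter.EventuallyEq.iteratedDeriv_eq k hev]
    exact ih K _ ((analyticAt_const.mul hg).add ((analyticAt_id).mul (analyticAt_deriv' hg)))
      (by omega)

lemma iteratedDeriv_add_at : ∀ (k : ℕ) (f g : ℂ → ℂ), AnalyticAt ℂ f 0 → AnalyticAt ℂ g 0 →
    iteratedDeriv k (fun z => f z + g z) 0 = iteratedDeriv k f 0 + iteratedDeriv k g 0 := by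
  intro k
  induction k with
  | zero => intro f g _ _; simp [iteratedDeriv_zero]
  | succ k ih =>
    intro f g hf hg
    rw [iteratedDeriv_succ', iteratedDeriv_succ', iteratedDeriv_succ']
    have hev : deriv (fun z => f z + g z) =ᶠ[𝓝 (0:ℂ)] fun z => deriv f z + deriv g z := by
      filter_upwards [hf.eventually_analyticAt, hg.eventually_analyticAt] with z h1 h2
      exact deriv_add h1.differentiableAt h2.differentiableAt
    rw [Filter.EventuallyEq.iteratedDeriv_eq k hev]
    exact ih _ _ (analyticAt_deriv' hf) (analyticAt_deriv' hg)

lemma iteratedDeriv_polyeval (P : Polynomial ℂ) : ∀ (k : ℕ),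
    iteratedDeriv k (fun z => P.eval z) = fun z => (Polynomial.derivative^[k] P).eval z := by
  intro k
  induction k generalizing P with
  | zero => simp [iteratedDeriv_zero]
  | succ k ih =>
    rw [iteratedDeriv_succ']
    have : deriv (fun z => P.eval z) = fun z => (Polynomial.derivative P).eval z := by
      funext z; exact Polynomial.deriv (p := P)
    rw [this, ih, Function.iterate_succ_apply]

lemma taylorCoeff_polyeval (P : Polynomial ℂ) (k : ℕ) :
    taylorCoeff (fun z => P.eval z) k = P.coeff k := by
  unfold taylorCoeff
  rw [iteratedDeriv_polyeval]
  show ((Polynomial.derivative^[k] P).eval 0) / _ = _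
  rw [show ((Polynomial.derivative^[k] P).eval 0) = (Polynomial.derivative^[k] P).coeff 0 by
    simp [Polynomial.coeff_zero_eq_eval_zero]]
  rw [Polynomial.coeff_iterate_derivative, zero_add, Nat.descFactorial_self]
  rw [nsmul_eq_mul]
  rw [mul_div_assoc, mul_div_cancel₀]
  exact_mod_cast Nat.factorial_ne_zero k

/-- `f` agrees, near `0`, with the polynomial `P` up to an error vanishing to order `K+1`. -/
def HasJet (K : ℕ) (f : ℂ → ℂ) (P : Polynomial ℂ) : Prop :=
  ∃ g : ℂ → ℂ, AnalyticAt ℂ g 0 ∧ ∀ᶠ z in 𝓝 (0:ℂ), f z = P.eval z + z ^ (K + 1) * g z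

lemma HasJet.taylorCoeff_eq {K : ℕ} {f : ℂ → ℂ} {P : Polynomial ℂ} (h : HasJet K f P)
    {k : ℕ} (hk : k ≤ K) : taylorCoeff f k = P.coeff k := by
  obtain ⟨g, hg, hev⟩ := h
  have h1 : taylorCoeff f k = taylorCoeff (fun z => P.eval z + z ^ (K+1) * g z) k := by
    unfold taylorCoeff
    rw [Filter.EventuallyEq.iteratedDeriv_eq k hev]
  rw [h1]
  unfold taylorCoeff
  rw [iteratedDeriv_add_at k (fun z => P.eval z) (fun z => z ^ (K+1) * g z)
    (analyticAt_polyeval P 0) ((analyticAt_id.pow _).mul hg)]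
  rw [vanish_highorder k K g hg hk, add_zero]
  exact taylorCoeff_polyeval P k

lemma HasJet.congr {K : ℕ} {f₁ f₂ : ℂ → ℂ} {P : Polynomial ℂ} (h : HasJet K f₁ P)
    (he : f₂ =ᶠ[𝓝 (0:ℂ)] f₁) : HasJet K f₂ P := by
  obtain ⟨g, hg, hev⟩ := h
  exact ⟨g, hg, he.trans hev⟩

lemma HasJet.of_le {N K : ℕ} {f : ℂ → ℂ} {P : Polynomial ℂ} (h : HasJet N f P) (hK : K ≤ N) :
    HasJet K f P := by
  obtain ⟨g, hg, hev⟩ := h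
  refine ⟨fun z => z ^ (N - K) * g z, (analyticAt_id.pow _).mul hg, ?_⟩
  filter_upwards [hev] with z hz
  have hNK : K + 1 + (N - K) = N + 1 := by omega
  rw [hz, ← mul_assoc, ← pow_add, hNK]

lemma HasJet.add {K : ℕ} {f g : ℂ → ℂ} {P Q : Polynomial ℂ} (hf : HasJet K f P)
    (hg : HasJet K g Q) : HasJet K (fun z => f z + g z) (P + Q) := by
  obtain ⟨g₁, hg₁, he₁⟩ := hf
  obtain ⟨g₂, hg₂, he₂⟩ := hg
  refine ⟨fun z => g₁ z + g₂ z, hg₁.add hg₂, ?_⟩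
  filter_upwards [he₁, he₂] with z h1 h2
  rw [h1, h2]; simp; ring

lemma HasJet.const_mul {K : ℕ} {f : ℂ → ℂ} {P : Polynomial ℂ} (hf : HasJet K f P) (c : ℂ) :
    HasJet K (fun z => c * f z) (Polynomial.C c * P) := by
  obtain ⟨g₁, hg₁, he₁⟩ := hf
  refine ⟨fun z => c * g₁ z, analyticAt_const.mul hg₁, ?_⟩
  filter_upwards [he₁] with z h1
  rw [h1]; simp; ring

lemma HasJet.neg {K : ℕ} {f : ℂ → ℂ} {P : Polynomial ℂ} (hf : HasJet K f P) :
    HasJet K (fun z => -(f z)) (-P) := by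
  have := hf.const_mul (-1)
  simpa using this

lemma HasJet.mul {K : ℕ} {f g : ℂ → ℂ} {P Q : Polynomial ℂ} (hf : HasJet K f P)
    (hg : HasJet K g Q) : HasJet K (fun z => f z * g z) (P * Q) := by
  obtain ⟨g₁, hg₁, he₁⟩ := hf
  obtain ⟨g₂, hg₂, he₂⟩ := hg
  refine ⟨fun z => P.eval z * g₂ z + g₁ z * Q.eval z + z ^ (K+1) * (g₁ z * g₂ z), ?_, ?_⟩
  · exact (((analyticAt_polyeval P 0).mul hg₂).add (hg₁.mul (analyticAt_polyeval Q 0))).add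
      ((analyticAt_id.pow _).mul (hg₁.mul hg₂))
  · filter_upwards [he₁, he₂] with z h1 h2
    rw [h1, h2]; simp; ring

lemma HasJet.pow {K : ℕ} {f : ℂ → ℂ} {P : Polynomial ℂ} (hf : HasJet K f P) :
    ∀ s : ℕ, HasJet K (fun z => (f z) ^ (s + 1)) (P ^ (s + 1)) := by
  intro s
  induction s with
  | zero => simpa [pow_one] using hf
  | succ s ih =>
    have := hf.mul ih
    rw [← pow_succ'] at this
    convert this using 2 with z
    rw [← pow_succ']

lemma HasJet.sum {K : ℕ} {ι : Type*} (s : Finset ι) (F : ι → ℂ → ℂ) (P : ι → Polynomial ℂ)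
    (h : ∀ i ∈ s, HasJet K (F i) (P i)) :
    HasJet K (fun z => ∑ i ∈ s, F i z) (∑ i ∈ s, P i) := by
  classical
  induction s using Finset.induction with
  | empty => exact ⟨fun _ => 0, analyticAt_const, by filter_upwards with z; simp⟩
  | insert x s' hx ih =>
    simp only [Finset.sum_insert hx]
    exact (h x (Finset.mem_insert_self x s')).add
      (ih fun i hi => h i (Finset.mem_insert_of_mem hi))

lemma dslope_expansion : ∀ (K : ℕ) (f : ℂ → ℂ) (z : ℂ),
    f z = (∑ m ∈ Finset.range (K+1), ((Function.swap dslope (0:ℂ))^[m] f 0) * z ^ m)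
      + z ^ (K+1) * ((Function.swap dslope (0:ℂ))^[K+1] f z) := by
  intro K
  induction K with
  | zero =>
    intro f z
    have h := sub_smul_dslope f 0 z
    simp only [sub_zero, smul_eq_mul] at h
    rw [Finset.range_one, Finset.sum_singleton]
    show f z = f 0 * z ^ 0 + z ^ 1 * dslope f 0 z
    simp only [pow_zero, pow_one, mul_one]
    linear_combination -h
  | succ K ih =>
    intro f z
    have h := sub_smul_dslope f 0 z
    simp only [sub_zero, smul_eq_mul] at h
    have hIH := ih (dslope f 0) z
    have hit : ∀ m : ℕ, (Function.swap dslope (0:ℂ))^[m] (dslope f 0)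
        = (Function.swap dslope (0:ℂ))^[m+1] f := by
      intro m
      rw [Function.iterate_succ_apply]
    simp only [hit] at hIH
    rw [Finset.sum_range_succ']
    simp only [pow_zero, mul_one, Function.iterate_zero, id_eq]
    have hz : f z = f 0 + z * dslope f 0 z := by linear_combination -h
    rw [hz, hIH, mul_add, Finset.mul_sum]
    have : ∀ m ∈ Finset.range (K+1),
        z * ((Function.swap dslope (0:ℂ))^[m+1] f 0 * z ^ m)
          = (Function.swap dslope (0:ℂ))^[m+1] f 0 * z ^ (m+1) := by
      intro m _; ring
    rw [Finset.sum_congr rfl this]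
    ring

lemma jet_exists (f : ℂ → ℂ) (hf : AnalyticAt ℂ f 0) (K : ℕ) :
    HasJet K f (∑ m ∈ Finset.range (K+1),
      Polynomial.C ((Function.swap dslope (0:ℂ))^[m] f 0) * Polynomial.X ^ m) := by
  obtain ⟨p, hp⟩ := hf
  refine ⟨(Function.swap dslope (0:ℂ))^[K+1] f,
    (HasFPowerSeriesAt.has_fpower_series_iterate_dslope_fslope (K+1) hp).analyticAt, ?_⟩
  filter_upwards with z
  have := dslope_expansion K f z
  rw [this]
  congr 1
  simp [Polynomial.eval_finset_sum]

lemma coeff_jetpoly (c : ℕ → ℂ) (K j : ℕ) :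
    (∑ m ∈ Finset.range (K+1), Polynomial.C (c m) * Polynomial.X ^ m).coeff j
      = if j ≤ K then c j else 0 := by
  rw [Polynomial.finset_sum_coeff]
  simp only [Polynomial.coeff_C_mul, Polynomial.coeff_X_pow, mul_ite, mul_one, mul_zero]
  rw [Finset.sum_ite_eq (Finset.range (K+1)) j c]
  simp [Nat.lt_succ_iff]

lemma geo_identity (E : ℂ) (hE : E ≠ 0) : ∀ (m : ℕ) (x : ℂ), E - x ≠ 0 →
    -x * ((E + x) / (E - x)) =
      -x + (-2) * (∑ s ∈ Finset.Icc 1 m, (E⁻¹) ^ s * x ^ (s + 1))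
        + (-2 * (E⁻¹) ^ m) * (x ^ (m + 2) / (E - x)) := by
  intro m
  induction m with
  | zero =>
    intro x hx
    simp only [Finset.Icc_self, pow_zero, mul_one]
    rw [show Finset.Icc 1 0 = (∅ : Finset ℕ) by rfl]
    simp only [Finset.sum_empty, mul_zero, add_zero]
    field_simp
    ring
  | succ m ih =>
    intro x hx
    rw [ih x hx, Finset.sum_Icc_succ_top (by omega)]
    field_simp
    have hEE : E * E⁻¹ = 1 := mul_inv_cancel₀ hE
    linear_combination (x ^ 2 * x ^ m * E⁻¹ ^ m * 2) * hEE

lemma matrix_lemma (n : ℕ) (a : Fin n → ℂ) (Pn : Polynomial ℂ)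
    (h0 : Pn.coeff 0 = 0) (hcoeff : ∀ j : Fin n, Pn.coeff (j.1 + 1) = a j) :
    ∀ (s : ℕ) (j : Fin n), ((toeplitzA a ^ s).mulVec a) j = (Pn ^ (s + 1)).coeff (j.1 + 1) := by
  intro s
  induction s with
  | zero =>
    intro j
    simp only [pow_zero, Matrix.one_mulVec, zero_add, pow_one]
    exact (hcoeff j).symm
  | succ s ih =>
    intro j
    set Q : Polynomial ℂ := Pn ^ (s + 1) with hQ
    have hQ0 : Q.coeff 0 = 0 := by
      rw [hQ, Polynomial.coeff_zero_eq_eval_zero, Polynomial.eval_pow,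
        ← Polynomial.coeff_zero_eq_eval_zero, h0, zero_pow (by omega)]
    set a' : ℕ → ℂ := fun t => if h : t < n then a ⟨t, h⟩ else 0 with ha'
    have hva : ∀ i : ℕ, i < n → a' i = Pn.coeff (i + 1) := by
      intro i hi
      rw [ha']
      simp only [hi, dif_pos]
      exact (hcoeff ⟨i, hi⟩).symm
    have hvQ : ∀ i : ℕ, (h : i < n) → ((toeplitzA a ^ s).mulVec a) ⟨i, h⟩ = Q.coeff (i + 1) :=
      fun i h => ih ⟨i, h⟩
    rw [pow_succ']
    rw [← Matrix.mulVec_mulVec]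
    set v : Fin n → ℂ := (toeplitzA a ^ s).mulVec a with hv
    have lhs_eq : (toeplitzA a).mulVec v j
        = ∑ i ∈ Finset.range j.1, a' (j.1 - i - 1) * Q.coeff (i + 1) := by
      have e1 : (toeplitzA a).mulVec v j
          = ∑ i ∈ Finset.range n, (if i < j.1 then a' (j.1 - i - 1) else 0)
              * (if h : i < n then Q.coeff (i + 1) else 0) := by
        rw [Matrix.mulVec, dotProduct,
          ← Fin.sum_univ_eq_sum_range (fun t => (if t < j.1 then a' (j.1 - t - 1) else 0)
            * (if h : t < n then Q.coeff (t + 1) else 0)) n]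
        apply Finset.sum_congr rfl
        intro i _
        show toeplitzA a j i * v i = _
        simp only [i.isLt, dif_pos]
        congr 1
        · rw [toeplitzA, Matrix.of_apply]
          by_cases hij : (i : ℕ) < (j : ℕ)
          · rw [dif_pos hij, if_pos hij, ha']
            have : (j:ℕ) - (i:ℕ) - 1 < n := by have := j.isLt; omega
            simp only [this, dif_pos]
          · rw [dif_neg hij, if_neg hij]
        · rw [← hvQ i.1 i.isLt]
      rw [e1, ← Finset.sum_subset (Finset.range_subset_range.2 (le_of_lt j.isLt))]
      · apply Finset.sum_congr rfl
        intro i hi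
        have hij : i < j.1 := Finset.mem_range.1 hi
        have hin : i < n := lt_trans hij j.isLt
        rw [if_pos hij, dif_pos hin]
      · intro x _ hx
        rw [if_neg (by simpa using hx), zero_mul]
    rw [lhs_eq]
    rw [pow_succ']
    rw [← hQ, Polynomial.coeff_mul]
    rw [Finset.Nat.sum_antidiagonal_eq_sum_range_succ_mk]
    rw [Finset.sum_range_succ, Finset.sum_range_succ']
    simp only [h0, zero_mul, Nat.sub_self, hQ0, mul_zero, add_zero, zero_add]
    rw [← Finset.sum_range_reflect]
    apply Finset.sum_congr rfl
    intro i hi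
    have hij : i < j.1 := Finset.mem_range.1 hi
    have e2 : j.1 - (j.1 - 1 - i) - 1 = i := by omega
    have e3 : j.1 - 1 - i + 1 = j.1 - i := by omega
    have e4 : j.1 + 1 - (i + 1) = j.1 - i := by omega
    rw [e2, e3, e4, hva i (lt_trans hij j.isLt)]

end Aux

/-- for a holomorphic self-map `w` of the unit disk fixing `0`, with first `n`
Taylor coefficients `a = (a_1, …, a_n)`, the `k`-th Taylor coefficient of
`-w·(e^{iu}+w)/(e^{iu}-w)` equals `-a_k - 2∑_{s=1}^{k-1} e^{-isu}(A(a)^s a)_k`. -/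
theorem taylorCoeff_loewner_rhs
    (n : ℕ) (w : ℂ → ℂ)
    (hw : DifferentiableOn ℂ w (ball (0 : ℂ) 1)) (hw0 : w 0 = 0)
    (hbd : ∀ z ∈ ball (0 : ℂ) 1, ‖w z‖ < 1)
    (a : Fin n → ℂ) (ha : ∀ k : Fin n, a k = taylorCoeff w (k.1 + 1)) :
    ∀ u : ℝ, ∀ k : Fin n,
      taylorCoeff (fun z => -(w z) * lkernel (w z) u) (k.1 + 1)
        = -(a k) - 2 * ∑ s ∈ Finset.Icc 1 (k.1 : ℕ),
            Complex.exp (-(s : ℂ) * (u : ℂ) * Complex.I) * ((toeplitzA a ^ s).mulVec a) k := by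
  intro u k
  have hw0' : AnalyticAt ℂ w 0 := hw.analyticAt (Metric.ball_mem_nhds 0 one_pos)
  have hKn : k.1 + 1 ≤ n := k.isLt
  set E : ℂ := Complex.exp (u * Complex.I) with hE
  have hEne : E ≠ 0 := Complex.exp_ne_zero _
  have hEabs : ‖E‖ = 1 := Complex.norm_exp_ofReal_mul_I u
  set c : ℕ → ℂ := fun m => (Function.swap dslope (0:ℂ))^[m] w 0 with hcdef
  set Pn : Polynomial ℂ :=
    ∑ m ∈ Finset.range (n+1), Polynomial.C (c m) * Polynomial.X ^ m with hPn
  have jet_w_n : HasJet n w Pn := jet_exists w hw0' n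
  have jet_w : HasJet (k.1+1) w Pn := jet_w_n.of_le hKn
  have hPncoeff : ∀ j : ℕ, j ≤ n → Pn.coeff j = c j := by
    intro j hj; rw [hPn, coeff_jetpoly, if_pos hj]
  have hc0 : c 0 = 0 := by simp [hcdef, hw0]
  have hPn0 : Pn.coeff 0 = 0 := by rw [hPncoeff 0 (Nat.zero_le n), hc0]
  have hPnA : ∀ j : Fin n, Pn.coeff (j.1+1) = a j := by
    intro j
    rw [ha j]
    exact (jet_w_n.taylorCoeff_eq (by omega : j.1+1 ≤ n)).symm
  have hwz : ∀ z, w z = z * dslope w 0 z := by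
    intro z
    have h := sub_smul_dslope w 0 z
    simp only [sub_zero, smul_eq_mul, hw0] at h
    linear_combination -h
  have hds : AnalyticAt ℂ (dslope w 0) 0 := by
    obtain ⟨p, hp⟩ := hw0'
    exact (hp.has_fpower_series_dslope_fslope).analyticAt
  have hmain : (fun z => -(w z) * lkernel (w z) u) =ᶠ[𝓝 (0:ℂ)]
      (fun z => (-(w z) + (-2) * (∑ s ∈ Finset.Icc 1 k.1, (E⁻¹)^s * (w z)^(s+1)))
        + (-2 * (E⁻¹)^(k.1)) * ((w z)^(k.1+2) / (E - w z))) := by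
    filter_upwards [Metric.ball_mem_nhds (0:ℂ) one_pos] with z hz
    have h1 : E - w z ≠ 0 := by
      intro hcon
      have h2 : E = w z := by linear_combination hcon
      have := hbd z hz
      rw [← h2, hEabs] at this
      exact lt_irrefl 1 this
    have hgeo := geo_identity E hEne k.1 (w z) h1
    show -(w z) * lkernel (w z) u = _
    rw [lkernel, ← hE]
    linear_combination hgeo
  have jet2 : HasJet (k.1+1) (fun z => ∑ s ∈ Finset.Icc 1 k.1, (E⁻¹)^s * (w z)^(s+1))
      (∑ s ∈ Finset.Icc 1 k.1, Polynomial.C ((E⁻¹)^s) * Pn^(s+1)) :=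
    HasJet.sum _ _ _ (fun s _ => (jet_w.pow s).const_mul ((E⁻¹)^s))
  have jet3 : HasJet (k.1+1) (fun z => (w z)^(k.1+2) / (E - w z)) (0 : Polynomial ℂ) := by
    refine ⟨fun z => (dslope w 0 z)^(k.1+2) / (E - w z), ?_, ?_⟩
    · refine (hds.pow _).div (analyticAt_const.sub hw0') ?_
      show E - w 0 ≠ 0
      rw [hw0, sub_zero]
      exact hEne
    · filter_upwards with z
      rw [Polynomial.eval_zero]
      rw [hwz z]
      rw [mul_pow]
      have : z ^ (k.1+2) = z ^ (k.1+1+1) := rfl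
      rw [this]
      ring
  have jetF : HasJet (k.1+1) (fun z => -(w z) * lkernel (w z) u)
      (((-Pn) + Polynomial.C (-2) * (∑ s ∈ Finset.Icc 1 k.1, Polynomial.C ((E⁻¹)^s) * Pn^(s+1)))
        + Polynomial.C (-2 * (E⁻¹)^(k.1)) * (0 : Polynomial ℂ)) :=
    ((jet_w.neg.add (jet2.const_mul (-2))).add
      (jet3.const_mul (-2 * (E⁻¹)^(k.1)))).congr hmain
  rw [jetF.taylorCoeff_eq (le_refl (k.1+1))]
  simp only [mul_zero, Polynomial.coeff_add, Polynomial.coeff_neg, Polynomial.coeff_C_mul,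
    Polynomial.coeff_zero, Polynomial.finset_sum_coeff, add_zero]
  rw [hPnA k]
  have hsum : ∀ s ∈ Finset.Icc 1 k.1, (E⁻¹)^s * (Pn^(s+1)).coeff (k.1+1)
      = Complex.exp (-(s:ℂ) * (u:ℂ) * Complex.I) * ((toeplitzA a ^ s).mulVec a) k := by
    intro s _
    rw [← matrix_lemma n a Pn hPn0 hPnA s k]
    congr 1
    have hinv : E⁻¹ = Complex.exp (-((u:ℂ) * Complex.I)) := by
      rw [hE, Complex.exp_neg]
    rw [hinv, ← Complex.exp_nat_mul]
    congr 1
    ring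
  rw [Finset.sum_congr rfl hsum]
  ring
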